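/- Let P be a non-degenerate elliptical distribution on ℝ^d and let 𝓛 be a set of fewer than (d² + d)/2 one-dimensional subspaces of ℝ^d. Then there exists a non-degenerate elliptical distribution Q ≠ P on ℝ^d with P_L = Q_L for all L ∈ 𝓛. -/

import Mathlib

open MeasureTheory

/-- The characteristic function of a measure on `ℝ^d`. -/
noncomputable def cf {d : ℕ} (P : Measure (EuclideanSpace ℝ (Fin d)))
    (ξ : EuclideanSpace ℝ (Fin d)) : ℂ :=
  ∫ x, Complex.exp (((inner ℝ x ξ : ℝ) : ℂ) * Complex.I) ∂P

/-- The quadratic form `ξᵀ M ξ`. -/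
noncomputable def qf {d : ℕ} (M : Matrix (Fin d) (Fin d) ℝ)
    (ξ : EuclideanSpace ℝ (Fin d)) : ℝ :=
  dotProduct (fun i => ξ i) (M.mulVec (fun i => ξ i))

/-- `P` is an elliptical distribution with location `μ`, scatter matrix `Sig`
and generator `ψ`. -/
def IsElliptical {d : ℕ} (P : Measure (EuclideanSpace ℝ (Fin d)))
    (μ : EuclideanSpace ℝ (Fin d)) (Sig : Matrix (Fin d) (Fin d) ℝ) (ψ : ℝ → ℂ) : Prop :=
  IsProbabilityMeasure P ∧ Sig.PosSemidef ∧ ContinuousOn ψ (Set.Ici 0) ∧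
    ∀ ξ, cf P ξ = Complex.exp (((inner ℝ μ ξ : ℝ) : ℂ) * Complex.I) * ψ (qf Sig ξ)

/-- A measure on `ℝ^d` is non-degenerate if it is not supported in any affine
hyperplane `{z | y·z = c}` with `y ≠ 0`. -/
def Nondegenerate {d : ℕ} (P : Measure (EuclideanSpace ℝ (Fin d))) : Prop :=
  ∀ y : EuclideanSpace ℝ (Fin d), y ≠ 0 → ∀ c : ℝ,
    P {z | (inner ℝ y z : ℝ) = c} ≠ 1

/-- The projection of `P` onto the line spanned by `x`: the pushforward of `P`
under the orthogonal projection onto `span {x}`. -/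
noncomputable def projLine {d : ℕ} (P : Measure (EuclideanSpace ℝ (Fin d)))
    (x : EuclideanSpace ℝ (Fin d)) :
    Measure (Submodule.span ℝ ({x} : Set (EuclideanSpace ℝ (Fin d)))) :=
  P.map ((Submodule.span ℝ {x}).orthogonalProjectionOnto)

/-! ### Auxiliary lemmas -/

section Aux

open Complex Set Filter Topology Matrix

/-- Continuous functions on a compact space are integrable for finite measures. -/
lemma integrable_cont_compact {X E : Type*} [MeasurableSpace X] [TopologicalSpace X]
    [OpensMeasurableSpace X] [CompactSpace X] [NormedAddCommGroup E]
    [SecondCountableTopologyEither X E]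
    (μ : Measure X) [IsFiniteMeasure μ] (f : C(X, E)) :
    Integrable f μ :=
  (integrable_const ‖f‖).mono' f.continuous.aestronglyMeasurable
    (Filter.Eventually.of_forall f.norm_coe_le_norm)

/-- Two probability measures on `ℝ` with equal characteristic function have equal
pushforwards on every circle `ℝ/Tℤ`. -/
lemma map_addCircle_eq {T : ℝ} (hT : 0 < T) (α β : Measure ℝ)
    [IsProbabilityMeasure α] [IsProbabilityMeasure β]
    (h : ∀ t : ℝ, ∫ x, Complex.exp (t * x * Complex.I) ∂α
        = ∫ x, Complex.exp (t * x * Complex.I) ∂β) :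
    α.map ((↑) : ℝ → AddCircle T) = β.map ((↑) : ℝ → AddCircle T) := by
  haveI : Fact (0 < T) := ⟨hT⟩
  have hqc : Continuous ((↑) : ℝ → AddCircle T) := AddCircle.continuous_mk' T
  have hqm : Measurable ((↑) : ℝ → AddCircle T) := hqc.measurable
  set αq := α.map ((↑) : ℝ → AddCircle T) with hαq
  set βq := β.map ((↑) : ℝ → AddCircle T) with hβq
  haveI : IsProbabilityMeasure αq := Measure.isProbabilityMeasure_map hqm.aemeasurable
  haveI : IsProbabilityMeasure βq := Measure.isProbabilityMeasure_map hqm.aemeasurable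
  have key : ∀ f : C(AddCircle T, ℂ), ∫ z, f z ∂αq = ∫ z, f z ∂βq := by
    intro f
    let Lα : C(AddCircle T, ℂ) →ₗ[ℂ] ℂ :=
      { toFun := fun f => ∫ z, f z ∂αq
        map_add' := fun f g => by
          simp only [ContinuousMap.add_apply]
          exact integral_add (integrable_cont_compact αq f) (integrable_cont_compact αq g)
        map_smul' := fun c f => by
          simp only [ContinuousMap.smul_apply, RingHom.id_apply, smul_eq_mul]
          exact integral_smul c _ }
    let Lβ : C(AddCircle T, ℂ) →ₗ[ℂ] ℂ :=
      { toFun := fun f => ∫ z, f z ∂βq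
        map_add' := fun f g => by
          simp only [ContinuousMap.add_apply]
          exact integral_add (integrable_cont_compact βq f) (integrable_cont_compact βq g)
        map_smul' := fun c f => by
          simp only [ContinuousMap.smul_apply, RingHom.id_apply, smul_eq_mul]
          exact integral_smul c _ }
    have hcont : ∀ (μ : Measure (AddCircle T)), IsProbabilityMeasure μ →
        Continuous (fun f : C(AddCircle T, ℂ) => ∫ z, f z ∂μ) := by
      intro μ hμ
      refine (LipschitzWith.of_dist_le_mul (K := 1) ?_).continuous
      intro f g
      rw [dist_eq_norm, dist_eq_norm, ← integral_sub (integrable_cont_compact μ f)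
        (integrable_cont_compact μ g)]
      calc ‖∫ z, (f z - g z) ∂μ‖ ≤ ‖f - g‖ * μ.real univ := by
            refine norm_integral_le_of_norm_le_const ?_
            exact Filter.Eventually.of_forall fun x => by
              simpa using (f - g).norm_coe_le_norm x
        _ ≤ 1 * ‖f - g‖ := by simp [hμ.measure_univ]
    have hK : Submodule.span ℂ (Set.range (@fourier T)) ≤ LinearMap.ker (Lα - Lβ) := by
      rw [Submodule.span_le]
      rintro _ ⟨n, rfl⟩
      simp only [SetLike.mem_coe, LinearMap.mem_ker, LinearMap.sub_apply, sub_eq_zero]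
      show ∫ z, fourier n z ∂αq = ∫ z, fourier n z ∂βq
      rw [hαq, hβq, integral_map hqm.aemeasurable (fourier n).continuous.aestronglyMeasurable,
        integral_map hqm.aemeasurable (fourier n).continuous.aestronglyMeasurable]
      have : ∀ x : ℝ, fourier n (x : AddCircle T)
          = Complex.exp (((2 * Real.pi * n / T : ℝ) : ℂ) * x * Complex.I) := by
        intro x
        rw [fourier_coe_apply]
        congr 1
        push_cast
        ring
      simp_rw [this]
      exact h _
    have hclosed : IsClosed (LinearMap.ker (Lα - Lβ) : Set C(AddCircle T, ℂ)) := by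
      have : (LinearMap.ker (Lα - Lβ) : Set C(AddCircle T, ℂ))
          = {f | ∫ z, f z ∂αq = ∫ z, f z ∂βq} := by
        ext f
        simp only [SetLike.mem_coe, LinearMap.mem_ker, LinearMap.sub_apply, sub_eq_zero,
          Set.mem_setOf_eq]
        rfl
      rw [this]
      exact isClosed_eq (hcont αq inferInstance) (hcont βq inferInstance)
    have htop : (⊤ : Submodule ℂ C(AddCircle T, ℂ)) ≤ LinearMap.ker (Lα - Lβ) := by
      rw [← span_fourier_closure_eq_top]
      exact Submodule.topologicalClosure_minimal _ hK hclosed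
    have := htop (Submodule.mem_top (x := f))
    exact sub_eq_zero.mp (LinearMap.mem_ker.mp this)
  refine ext_of_forall_lintegral_eq_of_IsFiniteMeasure ?_
  intro f
  have hg : Continuous fun x : AddCircle T => (f x : ℝ) :=
    NNReal.continuous_coe.comp f.continuous
  have hint : ∫ z, (f z : ℝ) ∂αq = ∫ z, (f z : ℝ) ∂βq := by
    have h2 := key ⟨fun x => ((f x : ℝ) : ℂ), Complex.continuous_ofReal.comp hg⟩
    simp only [ContinuousMap.coe_mk] at h2
    apply Complex.ofReal_injective
    have e1 : ∫ z, ((f z : ℝ) : ℂ) ∂αq = ((∫ z, (f z : ℝ) ∂αq : ℝ) : ℂ) :=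
      integral_ofReal (𝕜 := ℂ)
    have e2 : ∫ z, ((f z : ℝ) : ℂ) ∂βq = ((∫ z, (f z : ℝ) ∂βq : ℝ) : ℂ) :=
      integral_ofReal (𝕜 := ℂ)
    rw [← e1, ← e2]
    exact h2
  have hi1 : Integrable (fun x => (f x : ℝ)) αq := integrable_cont_compact αq ⟨_, hg⟩
  have hi2 : Integrable (fun x => (f x : ℝ)) βq := integrable_cont_compact βq ⟨_, hg⟩
  rw [lintegral_coe_eq_integral f hi1, lintegral_coe_eq_integral f hi2, hint]

/-- Uniqueness of characteristic functions on `ℝ`. -/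
lemma meas_ext_of_cf (α β : Measure ℝ) [IsProbabilityMeasure α] [IsProbabilityMeasure β]
    (h : ∀ t : ℝ, ∫ x, Complex.exp (t * x * Complex.I) ∂α
        = ∫ x, Complex.exp (t * x * Complex.I) ∂β) : α = β := by
  have hIoo : ∀ a b : ℝ, α (Ioo a b) = β (Ioo a b) := by
    intro a b
    rcases le_or_gt b a with hba | hab
    · rw [Set.Ioo_eq_empty (by exact fun hh => absurd (hh.trans_le hba) (lt_irrefl a))]
      simp
    set M : ℝ := max |a| |b| with hM
    have hM0 : 0 ≤ M := le_trans (abs_nonneg a) (le_max_left _ _)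
    set T : ℕ → ℝ := fun k => M + 1 + k with hT
    have hTpos : ∀ k : ℕ, 0 < T k := by
      intro k
      have : (0:ℝ) ≤ k := Nat.cast_nonneg k
      simp only [hT]; linarith
    set U : ℕ → Set ℝ := fun k => ⋃ n : ℤ, Ioo (a + n * T k) (b + n * T k) with hUdef
    have hUq : ∀ k : ℕ, ((↑) : ℝ → AddCircle (T k)) ⁻¹'
        (((↑) : ℝ → AddCircle (T k)) '' Ioo a b) = U k := by
      intro k
      ext x
      simp only [Set.mem_preimage, Set.mem_image, hUdef, Set.mem_iUnion, Set.mem_Ioo]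
      constructor
      · rintro ⟨y, hy, hxy⟩
        have : (y : AddCircle (T k)) = (x : AddCircle (T k)) := hxy
        rw [QuotientAddGroup.eq_iff_sub_mem, AddSubgroup.mem_zmultiples_iff] at this
        obtain ⟨n, hn⟩ := this
        rw [zsmul_eq_mul] at hn
        refine ⟨-n, ?_, ?_⟩ <;> push_cast <;> nlinarith [hy.1, hy.2]
      · rintro ⟨n, h1, h2⟩
        refine ⟨x - n * T k, ⟨by linarith, by linarith⟩, ?_⟩
        rw [QuotientAddGroup.eq_iff_sub_mem, AddSubgroup.mem_zmultiples_iff]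
        exact ⟨-n, by rw [zsmul_eq_mul]; push_cast; ring⟩
    have hU : ∀ k : ℕ, α (U k) = β (U k) := by
      intro k
      have hmap := map_addCircle_eq (hTpos k) α β h
      have hqm : Measurable ((↑) : ℝ → AddCircle (T k)) :=
        (AddCircle.continuous_mk' (T k)).measurable
      have himg : MeasurableSet (((↑) : ℝ → AddCircle (T k)) '' Ioo a b) := by
        have : IsOpen (((↑) : ℝ → AddCircle (T k)) '' Ioo a b) :=
          QuotientAddGroup.isOpenMap_coe _ isOpen_Ioo
        exact this.measurableSet
      have h1 := Measure.map_apply hqm himg (μ := α) (f := ((↑) : ℝ → AddCircle (T k)))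
      have h2 := Measure.map_apply hqm himg (μ := β) (f := ((↑) : ℝ → AddCircle (T k)))
      rw [hUq k] at h1 h2
      rw [← h1, ← h2, hmap]
    have htail : ∀ (γ : Measure ℝ), IsProbabilityMeasure γ →
        Tendsto (fun k : ℕ => γ {x : ℝ | (k:ℝ) ≤ |x|}) atTop (𝓝 0) := by
      intro γ hγ
      have hmeas : ∀ k : ℕ, MeasurableSet {x : ℝ | (k:ℝ) ≤ |x|} := by
        intro k
        exact (isClosed_le continuous_const _root_.continuous_abs).measurableSet
      have hanti : Antitone fun k : ℕ => {x : ℝ | (k:ℝ) ≤ |x|} := by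
        intro k l hkl x hx
        simp only [Set.mem_setOf_eq] at hx ⊢
        exact le_trans (by exact_mod_cast hkl : (k:ℝ) ≤ (l:ℝ)) hx
      have hempty : ⋂ k : ℕ, {x : ℝ | (k:ℝ) ≤ |x|} = ∅ := by
        ext x
        simp only [Set.mem_iInter, Set.mem_setOf_eq, Set.mem_empty_iff_false, iff_false,
          not_forall, not_le]
        obtain ⟨k, hk⟩ := exists_nat_gt |x|
        exact ⟨k, hk⟩
      have := tendsto_measure_iInter_atTop (μ := γ) (s := fun k : ℕ => {x : ℝ | (k:ℝ) ≤ |x|})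
        (fun k => (hmeas k).nullMeasurableSet) hanti ⟨0, measure_ne_top _ _⟩
      simpa [Function.comp_def, hempty, measure_empty] using this
    have hsq : ∀ (γ : Measure ℝ), IsProbabilityMeasure γ →
        Tendsto (fun k => γ (U k)) atTop (𝓝 (γ (Ioo a b))) := by
      intro γ hγ
      have hlow : ∀ k, γ (Ioo a b) ≤ γ (U k) := by
        intro k
        refine measure_mono ?_
        intro x hx
        rw [hUdef]
        refine Set.mem_iUnion.mpr ⟨0, ?_⟩
        simpa using hx
      have hupp : ∀ k, γ (U k) ≤ γ (Ioo a b) + γ {x : ℝ | (k:ℝ) ≤ |x|} := by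
        intro k
        refine le_trans (measure_mono ?_) (measure_union_le _ _)
        rw [hUdef]
        refine Set.iUnion_subset fun n => ?_
        intro x hx
        rcases eq_or_ne n 0 with rfl | hn
        · left; simpa using hx
        · right
          simp only [Set.mem_setOf_eq]
          have haM : -M ≤ a := neg_le_of_abs_le (le_max_left _ _)
          have hbM : b ≤ M := le_of_abs_le (le_max_right _ _)
          have hTk : T k = M + 1 + (k:ℝ) := rfl
          rcases lt_or_gt_of_ne hn with hneg | hpos
          · have hn1 : (n:ℝ) ≤ -1 := by exact_mod_cast (by omega : n ≤ -1)
            have h1 : (n:ℝ) * T k ≤ -1 * T k :=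
              mul_le_mul_of_nonneg_right hn1 (hTpos k).le
            have h2 : x < b + n * T k := hx.2
            have : (k:ℝ) ≤ -x := by linarith
            calc (k:ℝ) ≤ -x := this
              _ ≤ |x| := neg_le_abs x
          · have hn1 : (1:ℝ) ≤ (n:ℝ) := by exact_mod_cast hpos
            have h1 : (1:ℝ) * T k ≤ (n:ℝ) * T k :=
              mul_le_mul_of_nonneg_right hn1 (hTpos k).le
            have h2 : a + n * T k < x := hx.1
            have : (k:ℝ) ≤ x := by linarith
            exact le_trans this (le_abs_self x)
      have hub : Tendsto (fun k : ℕ => γ (Ioo a b) + γ {x : ℝ | (k:ℝ) ≤ |x|}) atTop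
          (𝓝 (γ (Ioo a b))) := by
        have := (htail γ hγ).const_add (γ (Ioo a b))
        simpa using this
      exact tendsto_of_tendsto_of_tendsto_of_le_of_le tendsto_const_nhds hub hlow hupp
    have hfun : (fun k => α (U k)) = fun k => β (U k) := funext hU
    have h1 := hsq α inferInstance
    have h2 := hsq β inferInstance
    rw [hfun] at h1
    exact tendsto_nhds_unique h1 h2
  have hIio : ∀ b : ℝ, α (Iio b) = β (Iio b) := by
    intro b
    have hdecomp : Iio b = ⋃ k : ℕ, Ioo (b - 1 - k) b := by
      ext x
      simp only [Set.mem_Iio, Set.mem_iUnion, Set.mem_Ioo]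
      constructor
      · intro hx
        obtain ⟨k, hk⟩ := exists_nat_gt (b - 1 - x)
        exact ⟨k, by linarith, hx⟩
      · rintro ⟨k, _, hk⟩; exact hk
    have hmono : Monotone fun k : ℕ => Ioo (b - 1 - k) b := by
      intro k l hkl x hx
      have : (k:ℝ) ≤ l := by exact_mod_cast hkl
      exact ⟨by linarith [hx.1], hx.2⟩
    rw [hdecomp, Directed.measure_iUnion hmono.directed_le,
      Directed.measure_iUnion hmono.directed_le]
    exact iSup_congr fun k => hIoo _ _
  have hIic : ∀ b : ℝ, α (Iic b) = β (Iic b) := by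
    intro b
    have hdecomp : Iic b = ⋂ k : ℕ, Iio (b + 1 / (k + 1)) := by
      ext x
      simp only [Set.mem_Iic, Set.mem_iInter, Set.mem_Iio]
      constructor
      · intro hx k
        have : (0:ℝ) < 1 / (k + 1) := by positivity
        linarith
      · intro hx
        by_contra hbx
        push_neg at hbx
        obtain ⟨k, hk⟩ := exists_nat_one_div_lt (sub_pos.mpr hbx)
        have := hx k
        push_cast at this hk ⊢
        linarith
    have hanti : Antitone fun k : ℕ => Iio (b + 1 / ((k:ℝ) + 1)) := by
      intro k l hkl x hx
      have hkl' : (k:ℝ) ≤ l := by exact_mod_cast hkl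
      have : 1 / ((l:ℝ) + 1) ≤ 1 / ((k:ℝ) + 1) := by
        apply one_div_le_one_div_of_le <;> linarith
      simp only [Set.mem_Iio] at hx ⊢
      linarith
    have hmeas : ∀ k : ℕ, MeasurableSet (Iio (b + 1 / ((k:ℝ) + 1))) := fun k => measurableSet_Iio
    rw [hdecomp,
      Directed.measure_iInter (fun k => (hmeas k).nullMeasurableSet) hanti.directed_ge
        ⟨0, measure_ne_top _ _⟩,
      Directed.measure_iInter (fun k => (hmeas k).nullMeasurableSet) hanti.directed_ge
        ⟨0, measure_ne_top _ _⟩]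
    exact iInf_congr fun k => hIio _
  exact Measure.ext_of_Iic α β hIic

/-- If all characteristic values along a direction are `1`, the corresponding linear
functional vanishes a.e. -/
lemma conc_ae {X : Type*} [MeasurableSpace X] (P : Measure X) [IsProbabilityMeasure P]
    (f : X → ℝ) (hf : Measurable f)
    (h : ∀ t : ℝ, ∫ x, Complex.exp (((t * f x : ℝ) : ℂ) * Complex.I) ∂P = 1) :
    ∀ᵐ x ∂P, f x = 0 := by
  have hintC : ∀ t : ℝ, Integrable (fun x => Complex.exp (((t * f x : ℝ) : ℂ) * Complex.I)) P := by
    intro t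
    refine (integrable_const (1:ℝ)).mono' ?_ ?_
    · exact (Complex.measurable_exp.comp
        ((Complex.measurable_ofReal.comp (hf.const_mul t)).mul_const Complex.I)).aestronglyMeasurable
    · exact Eventually.of_forall fun x => le_of_eq (Complex.norm_exp_ofReal_mul_I _)
  have hcos : ∀ t : ℝ, ∫ x, Real.cos (t * f x) ∂P = 1 := by
    intro t
    have h1 : ∫ x, (Complex.exp (((t * f x : ℝ) : ℂ) * Complex.I)).re ∂P
        = (∫ x, Complex.exp (((t * f x : ℝ) : ℂ) * Complex.I) ∂P).re := integral_re (hintC t)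
    rw [h t] at h1
    simp only [Complex.exp_ofReal_mul_I_re, Complex.one_re] at h1
    exact h1
  have hint : ∀ t : ℝ, Integrable (fun x => Real.cos (t * f x)) P := by
    intro t
    refine (integrable_const (1:ℝ)).mono' ?_ ?_
    · exact (Real.measurable_cos.comp (hf.const_mul t)).aestronglyMeasurable
    · exact Eventually.of_forall fun x => by
        rw [Real.norm_eq_abs]; exact Real.abs_cos_le_one _
  have hae : ∀ᵐ x ∂P, ∀ n : ℕ, Real.cos ((1/2 : ℝ)^n * f x) = 1 := by
    rw [ae_all_iff]
    intro n
    set t : ℝ := (1/2 : ℝ)^n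
    have hzero : ∫ x, (1 - Real.cos (t * f x)) ∂P = 0 := by
      rw [integral_sub (integrable_const 1) (hint t), hcos t]
      simp
    have hnn : 0 ≤ fun x => 1 - Real.cos (t * f x) := by
      intro x
      simp only [Pi.zero_apply, sub_nonneg]
      exact Real.cos_le_one _
    have := (integral_eq_zero_iff_of_nonneg hnn ((integrable_const 1).sub (hint t))).mp hzero
    filter_upwards [this] with x hx
    have : 1 - Real.cos (t * f x) = 0 := hx
    linarith
  filter_upwards [hae] with x hx
  by_contra hfx
  obtain ⟨n, hn⟩ := pow_unbounded_of_one_lt (|f x|) (one_lt_two (α := ℝ))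
  obtain ⟨m, hm⟩ := (Real.cos_eq_one_iff _).mp (hx n)
  have h2 : ((1:ℝ)/2)^n = ((2:ℝ)^n)⁻¹ := by rw [one_div, inv_pow]
  have hpow : (0:ℝ) < 2^n := by positivity
  have hfm : f x = 2^n * ((m : ℝ) * (2 * Real.pi)) := by
    rw [h2] at hm
    field_simp at hm
    linarith
  have hm0 : m ≠ 0 := by
    rintro rfl
    simp at hfm
    exact hfx hfm
  have hm1 : (1:ℝ) ≤ |(m:ℝ)| := by
    rw [← Int.cast_abs]
    exact_mod_cast Int.one_le_abs hm0
  have habs : |f x| = 2^n * (|(m:ℝ)| * (2 * Real.pi)) := by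
    rw [hfm, abs_mul, abs_mul, abs_of_pos hpow, abs_of_pos (by positivity : (0:ℝ) < 2 * Real.pi)]
  have hge : 2^n * (1 * (2 * Real.pi)) ≤ 2^n * (|(m:ℝ)| * (2 * Real.pi)) := by
    apply mul_le_mul_of_nonneg_left _ hpow.le
    apply mul_le_mul_of_nonneg_right hm1 (by positivity)
  nlinarith [Real.pi_gt_three, hn, habs, hge]

private lemma psi_const_aux {ψ : ℝ → ℂ} (hψ : ContinuousOn ψ (Set.Ici 0)) {a b : ℝ}
    (ha : 0 < a) (hlt : a < b)
    (h : ∀ s : ℝ, 0 ≤ s → ψ (a * s) = ψ (b * s)) :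
    ∀ s : ℝ, 0 ≤ s → ψ s = ψ 0 := by
  have hb : 0 < b := ha.trans hlt
  set r : ℝ := a / b with hr
  have hr0 : 0 < r := by positivity
  have hr1 : r < 1 := (div_lt_one hb).mpr hlt
  have key : ∀ s : ℝ, 0 ≤ s → ψ s = ψ (r * s) := by
    intro s hs
    have h1 := h (s / b) (by positivity)
    have e1 : b * (s / b) = s := by field_simp
    have e2 : a * (s / b) = r * s := by rw [hr]; field_simp
    rw [e1, e2] at h1
    exact h1.symm
  have iter : ∀ n : ℕ, ∀ s : ℝ, 0 ≤ s → ψ s = ψ (r ^ n * s) := by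
    intro n
    induction n with
    | zero => intro s _; simp
    | succ n ih =>
      intro s hs
      have h1 := ih s hs
      have h2 := key (r ^ n * s) (by positivity)
      rw [h1, h2]
      ring_nf
  intro s hs
  have htend : Tendsto (fun n : ℕ => r ^ n * s) atTop (𝓝 0) := by
    simpa using (tendsto_pow_atTop_nhds_zero_of_lt_one hr0.le hr1).mul_const s
  have hmem : ∀ n : ℕ, r ^ n * s ∈ Set.Ici (0:ℝ) := fun n => Set.mem_Ici.mpr (by positivity)
  have hcont : Tendsto ψ (𝓝[Set.Ici (0:ℝ)] 0) (𝓝 (ψ 0)) := hψ 0 (Set.self_mem_Ici)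
  have htend2 : Tendsto (fun n : ℕ => ψ (r ^ n * s)) atTop (𝓝 (ψ 0)) := by
    refine hcont.comp ?_
    rw [tendsto_nhdsWithin_iff]
    exact ⟨htend, Eventually.of_forall hmem⟩
  have hconst : (fun n : ℕ => ψ (r ^ n * s)) = fun _ => ψ s := by
    funext n; exact (iter n s hs).symm
  rw [hconst] at htend2
  exact tendsto_nhds_unique tendsto_const_nhds htend2

lemma psi_const {ψ : ℝ → ℂ} (hψ : ContinuousOn ψ (Set.Ici 0)) {a b : ℝ}
    (ha : 0 < a) (hb : 0 < b) (hab : a ≠ b)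
    (h : ∀ s : ℝ, 0 ≤ s → ψ (a * s) = ψ (b * s)) :
    ∀ s : ℝ, 0 ≤ s → ψ s = ψ 0 := by
  rcases lt_or_gt_of_ne hab with hlt | hgt
  · exact psi_const_aux hψ ha hlt h
  · exact psi_const_aux hψ hb hgt fun s hs => (h s hs).symm

lemma sym_qf_zero_imp {d : ℕ} {S : Matrix (Fin d) (Fin d) ℝ} (hs : Sᵀ = S)
    (hq : ∀ v : Fin d → ℝ, dotProduct v (S.mulVec v) = 0) : S = 0 := by
  have hbil : ∀ x y : Fin d → ℝ, dotProduct x (S.mulVec y) = 0 := by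
    intro x y
    have hxy := hq (x + y)
    have hx := hq x
    have hy := hq y
    have hv : ∀ z : Fin d → ℝ, Matrix.vecMul z S = S.mulVec z := by
      intro z
      nth_rewrite 1 [← hs]
      exact Matrix.vecMul_transpose S z
    have hsymm : dotProduct x (S.mulVec y) = dotProduct y (S.mulVec x) := by
      calc dotProduct x (S.mulVec y) = dotProduct (Matrix.vecMul x S) y :=
            Matrix.dotProduct_mulVec x S y
        _ = dotProduct (S.mulVec x) y := by rw [hv]
        _ = dotProduct y (S.mulVec x) := dotProduct_comm _ _
    simp only [Matrix.mulVec_add, add_dotProduct, dotProduct_add] at hxy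
    linarith [hsymm, hx, hy]
  ext i j
  have h1 := hbil (Pi.single i 1) (Pi.single j 1)
  rw [Matrix.mulVec_single] at h1
  show S i j = 0
  simpa [single_dotProduct] using h1

lemma exists_good_sym (d : ℕ) {ι : Type*} [Fintype ι] (u : ι → (Fin d → ℝ))
    (hcard : Fintype.card ι < (d ^ 2 + d) / 2) :
    ∃ S : Matrix (Fin d) (Fin d) ℝ, Sᵀ = S ∧ S ≠ 0 ∧
      ∀ i, dotProduct (u i) (S.mulVec (u i)) = 0 := by
  classical
  let Φ : Matrix (Fin d) (Fin d) ℝ →ₗ[ℝ] (ι → ℝ) :=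
    { toFun := fun A i => dotProduct (u i) (A.mulVec (u i))
      map_add' := fun A B => by
        funext i
        simp [Matrix.add_mulVec, dotProduct_add]
      map_smul' := fun c A => by
        funext i
        simp [Matrix.smul_mulVec, dotProduct_smul] }
  let τ : Matrix (Fin d) (Fin d) ℝ →ₗ[ℝ] Matrix (Fin d) (Fin d) ℝ :=
    { toFun := fun A => Aᵀ + A
      map_add' := fun A B => by simp [Matrix.transpose_add]; abel
      map_smul' := fun c A => by simp [Matrix.transpose_smul, smul_add] }
  set K := LinearMap.ker τ with hK
  let J := {p : Fin d × Fin d // (p.2 : ℕ) < (p.1 : ℕ)}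
  let ρ : Matrix (Fin d) (Fin d) ℝ →ₗ[ℝ] (J → ℝ) :=
    { toFun := fun A j => A j.1.1 j.1.2
      map_add' := fun A B => by funext j; simp
      map_smul' := fun c A => by funext j; simp }
  have hinj : ∀ A ∈ K, ρ A = 0 → A = 0 := by
    intro A hA hρ
    have hAs : Aᵀ + A = 0 := hA
    have hskew : ∀ i j, A j i = -A i j := by
      intro i j
      have := congrFun (congrFun hAs j) i
      simp only [Matrix.add_apply, Matrix.transpose_apply, Matrix.zero_apply] at this
      linarith
    ext i j
    show A i j = 0
    rcases lt_trichotomy (j : ℕ) (i : ℕ) with hlt | heq | hgt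
    · exact congrFun hρ ⟨(i, j), hlt⟩
    · have hij : i = j := Fin.ext heq.symm
      subst hij
      have := hskew i i
      linarith
    · have h2 : A j i = 0 := congrFun hρ ⟨(j, i), hgt⟩
      have h3 := hskew j i
      rw [h2] at h3
      linarith
  have hcardJ : Fintype.card J * 2 = d * d - d := by
    have e : J ≃ Σ i : Fin d, Fin (i : ℕ) :=
      { toFun := fun p => ⟨p.1.1, ⟨(p.1.2 : ℕ), p.2⟩⟩
        invFun := fun q => ⟨(q.1, ⟨(q.2 : ℕ), lt_trans q.2.2 q.1.2⟩), q.2.2⟩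
        left_inv := fun p => by ext <;> simp
        right_inv := fun q => by ext <;> simp }
    rw [Fintype.card_congr e, Fintype.card_sigma]
    simp only [Fintype.card_fin]
    rw [Fin.sum_univ_eq_sum_range (fun i => i) d, Finset.sum_range_id_mul_two]
    rcases d with _ | n
    · simp
    · have h1 : (n+1) * (n+1) = (n+1) * n + (n+1) := by ring
      simp only [Nat.succ_sub_one]
      omega
  have hdim : ∃ A ∈ LinearMap.ker Φ, Aᵀ + A ≠ 0 := by
    by_contra hcon
    push_neg at hcon
    have hle : LinearMap.ker Φ ≤ K := fun A hA => by
      simp only [hK, LinearMap.mem_ker]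
      exact hcon A hA
    have hKJ : Module.finrank ℝ K ≤ Fintype.card J := by
      have hinj' : Function.Injective (ρ.comp K.subtype) := by
        rw [← LinearMap.ker_eq_bot, LinearMap.ker_eq_bot']
        intro a ha
        exact Subtype.ext (hinj a.1 a.2 ha)
      calc Module.finrank ℝ K ≤ Module.finrank ℝ (J → ℝ) :=
            LinearMap.finrank_le_finrank_of_injective hinj'
        _ = Fintype.card J := by rw [Module.finrank_pi]
    have h2 : Module.finrank ℝ (LinearMap.ker Φ) ≤ Fintype.card J :=
      le_trans (Submodule.finrank_mono hle) hKJ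
    have h3 := LinearMap.finrank_range_add_finrank_ker Φ
    rw [Module.finrank_matrix, Fintype.card_fin] at h3
    simp only [Module.finrank_self, mul_one, one_mul] at h3
    have h4 : Module.finrank ℝ (LinearMap.range Φ) ≤ Fintype.card ι := by
      calc Module.finrank ℝ (LinearMap.range Φ) ≤ Module.finrank ℝ (ι → ℝ) :=
            Submodule.finrank_le _
        _ = Fintype.card ι := by rw [Module.finrank_pi]
    have hdd : d ^ 2 = d * d := sq d
    rw [hdd] at hcard
    have hda : d ≤ d * d := by nlinarith
    obtain ⟨a, ha⟩ : ∃ a, d * d = a := ⟨_, rfl⟩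
    rw [ha] at h3 hcard hda hcardJ
    omega
  obtain ⟨A, hA, hS⟩ := hdim
  refine ⟨Aᵀ + A, ?_, hS, ?_⟩
  · rw [Matrix.transpose_add, Matrix.transpose_transpose, add_comm]
  · intro i
    have hΦ : dotProduct (u i) (A.mulVec (u i)) = 0 :=
      congrFun (LinearMap.mem_ker.mp hA) i
    have htr : dotProduct (u i) (Aᵀ.mulVec (u i))
        = dotProduct (u i) (A.mulVec (u i)) := by
      rw [Matrix.mulVec_transpose, dotProduct_comm, ← Matrix.dotProduct_mulVec]
    rw [Matrix.add_mulVec, dotProduct_add, htr, hΦ]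
    simp

end Aux

section PD

open Matrix
open scoped MatrixOrder

private def Qq {d : ℕ} (M : Matrix (Fin d) (Fin d) ℝ) (x : Fin d → ℝ) : ℝ :=
  dotProduct x (M.mulVec x)

lemma Qq_smul {d : ℕ} (M : Matrix (Fin d) (Fin d) ℝ) (r : ℝ) (x : Fin d → ℝ) :
    Qq M (r • x) = r ^ 2 * Qq M x := by
  unfold Qq
  rw [Matrix.mulVec_smul, dotProduct_smul, smul_dotProduct]
  simp [smul_eq_mul]
  ring

lemma Qq_continuous {d : ℕ} (M : Matrix (Fin d) (Fin d) ℝ) :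
    Continuous fun v : EuclideanSpace ℝ (Fin d) => Qq M (fun i => v i) := by
  unfold Qq dotProduct Matrix.mulVec
  refine continuous_finset_sum _ fun i _ => ?_
  refine (((continuous_apply i).comp (PiLp.continuous_ofLp _ _)).mul ?_)
  unfold dotProduct
  exact continuous_finset_sum _ fun j _ => continuous_const.mul
    ((continuous_apply j).comp (PiLp.continuous_ofLp _ _))

lemma posDef_pos {d : ℕ} {M : Matrix (Fin d) (Fin d) ℝ} (hM : M.PosDef)
    {x : Fin d → ℝ} (hx : x ≠ 0) : 0 < Qq M x := by
  have := (Matrix.posDef_iff_dotProduct_mulVec.mp hM).2 hx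
  simpa [Qq] using this

lemma posdef_perturb {d : ℕ} (hd : 0 < d) {Sg S : Matrix (Fin d) (Fin d) ℝ}
    (hSg : Sg.PosDef) (hS : Sᵀ = S) :
    ∃ ε : ℝ, 0 < ε ∧ (Sg + ε • S).PosDef := by
  haveI : Nontrivial (EuclideanSpace ℝ (Fin d)) := by
    refine ⟨EuclideanSpace.single (⟨0, hd⟩ : Fin d) (1:ℝ), 0, fun h => ?_⟩
    have h1 : ‖EuclideanSpace.single (⟨0, hd⟩ : Fin d) (1:ℝ)‖ = 1 :=
      (EuclideanSpace.norm_single _ _).trans (norm_one)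
    rw [h] at h1
    simp at h1
  have hne : (Metric.sphere (0 : EuclideanSpace ℝ (Fin d)) 1).Nonempty :=
    NormedSpace.sphere_nonempty.mpr zero_le_one
  obtain ⟨v0, hv0, hmin⟩ := (isCompact_sphere (0 : EuclideanSpace ℝ (Fin d)) 1).exists_isMinOn hne
    (Qq_continuous Sg).continuousOn
  obtain ⟨w0, hw0, hmax⟩ := (isCompact_sphere (0 : EuclideanSpace ℝ (Fin d)) 1).exists_isMaxOn hne
    ((Qq_continuous S).abs).continuousOn
  set c : ℝ := Qq Sg (fun i => v0 i) with hc
  set b : ℝ := |Qq S (fun i => w0 i)| with hb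
  have hv0ne : (fun i => v0 i) ≠ (0 : Fin d → ℝ) := by
    intro h0
    have : v0 = 0 := by ext i; exact congrFun h0 i
    rw [this] at hv0
    simp at hv0
  have hcpos : 0 < c := posDef_pos hSg hv0ne
  have hbnn : 0 ≤ b := abs_nonneg _
  set ε : ℝ := c / (b + 1) with hε
  have hεpos : 0 < ε := by positivity
  refine ⟨ε, hεpos, Matrix.posDef_iff_dotProduct_mulVec.mpr ⟨?_, ?_⟩⟩
  · have h1 : Sᴴ = S := by rw [Matrix.conjTranspose_eq_transpose_of_trivial, hS]
    show (Sg + ε • S)ᴴ = _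
    rw [Matrix.conjTranspose_add, Matrix.conjTranspose_smul, h1, hSg.1.eq]
    simp
  · intro x hx
    have hexp : dotProduct (star x) ((Sg + ε • S).mulVec x) = Qq Sg x + ε * Qq S x := by
      rw [star_trivial]
      rw [Matrix.add_mulVec, dotProduct_add, Matrix.smul_mulVec,
        dotProduct_smul]
      simp [Qq, smul_eq_mul]
    rw [hexp]
    set v : EuclideanSpace ℝ (Fin d) := WithLp.toLp 2 x with hv
    have hvne : v ≠ 0 := by
      intro h0
      apply hx
      ext i
      exact congrFun (congrArg (fun (z : EuclideanSpace ℝ (Fin d)) => (z : Fin d → ℝ)) h0) i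
    have hr : 0 < ‖v‖ := norm_pos_iff.mpr hvne
    set u : EuclideanSpace ℝ (Fin d) := ‖v‖⁻¹ • v with hu
    have hun : u ∈ Metric.sphere (0 : EuclideanSpace ℝ (Fin d)) 1 := by
      simp [hu, norm_smul, abs_of_pos (inv_pos.mpr hr), inv_mul_cancel₀ hr.ne']
    have hvu : x = ‖v‖ • (fun i => u i) := by
      funext i
      show v i = (‖v‖ • ((‖v‖⁻¹ • v) : EuclideanSpace ℝ (Fin d))) i
      rw [smul_inv_smul₀ hr.ne']
    have hQg : Qq Sg x = ‖v‖ ^ 2 * Qq Sg (fun i => u i) := by rw [hvu, Qq_smul]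
    have hQS : Qq S x = ‖v‖ ^ 2 * Qq S (fun i => u i) := by rw [hvu, Qq_smul]
    have hmin' : c ≤ Qq Sg (fun i => u i) := hmin hun
    have hmax' : |Qq S (fun i => u i)| ≤ b := hmax hun
    have hεb : ε * b < c := by
      rw [hε]
      rw [div_mul_eq_mul_div, div_lt_iff₀ (by positivity)]
      nlinarith
    have h1 : -(Qq S (fun i => u i)) ≤ b := by
      have := neg_le_abs (Qq S (fun i => u i))
      have h2 := neg_le_neg hmax'
      linarith [neg_abs_le (Qq S (fun i => u i))]
    rw [hQg, hQS]
    have hn2 : 0 < ‖v‖ ^ 2 := by positivity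
    nlinarith [mul_le_mul_of_nonneg_left h1 hεpos.le]

lemma exists_sym_factor {d : ℕ} {Sg : Matrix (Fin d) (Fin d) ℝ} (h : Sg.PosDef) :
    ∃ B : Matrix (Fin d) (Fin d) ℝ, Bᵀ = B ∧ IsUnit B.det ∧ B * B = Sg := by
  refine ⟨CFC.sqrt Sg, ?_, ?_, CFC.sqrt_mul_sqrt_self Sg h.posSemidef.nonneg⟩
  · rw [← Matrix.conjTranspose_eq_transpose_of_trivial]
    exact (CFC.sqrt_nonneg Sg).posSemidef.1
  · rw [isUnit_iff_ne_zero]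
    intro h0
    have hdet : Sg.det = 0 := by
      rw [← CFC.sqrt_mul_sqrt_self Sg h.posSemidef.nonneg, Matrix.det_mul, h0, mul_zero]
    exact (ne_of_gt h.det_pos) hdet

lemma exists_conjugator {d : ℕ} {Sg Sg' : Matrix (Fin d) (Fin d) ℝ}
    (h : Sg.PosDef) (h' : Sg'.PosDef) :
    ∃ C : Matrix (Fin d) (Fin d) ℝ, IsUnit C.det ∧ C * Sg * Cᵀ = Sg' := by
  obtain ⟨B, hBs, hBd, hBB⟩ := exists_sym_factor h
  obtain ⟨B', hBs', hBd', hBB'⟩ := exists_sym_factor h'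
  refine ⟨B' * B⁻¹, ?_, ?_⟩
  · rw [Matrix.det_mul, Matrix.det_nonsing_inv, Ring.inverse_eq_inv', isUnit_iff_ne_zero]
    exact mul_ne_zero (by simpa [isUnit_iff_ne_zero] using hBd')
      (inv_ne_zero (by simpa [isUnit_iff_ne_zero] using hBd))
  · have hT : (B' * B⁻¹)ᵀ = B⁻¹ * B' := by
      rw [Matrix.transpose_mul, Matrix.transpose_nonsing_inv, hBs, hBs']
    rw [hT, ← hBB]
    calc B' * B⁻¹ * (B * B) * (B⁻¹ * B')
        = B' * (B⁻¹ * B * (B * B⁻¹)) * B' := by simp only [Matrix.mul_assoc]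
      _ = B' * B' := by
          rw [Matrix.nonsing_inv_mul B hBd, Matrix.mul_nonsing_inv B hBd]
          simp
      _ = Sg' := hBB'

end PD

section CF

open Complex Set Filter Topology Matrix

variable {d : ℕ}

lemma cf_integrand_cont (ξ : EuclideanSpace ℝ (Fin d)) :
    Continuous fun x : EuclideanSpace ℝ (Fin d) =>
      Complex.exp (((inner ℝ x ξ : ℝ) : ℂ) * Complex.I) := by
  refine Complex.continuous_exp.comp ?_
  exact (Complex.continuous_ofReal.comp (continuous_id.inner continuous_const)).mul
    continuous_const

lemma cf_zero (P : Measure (EuclideanSpace ℝ (Fin d))) [IsProbabilityMeasure P] :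
    cf P 0 = 1 := by
  unfold cf
  simp

lemma qf_zero (M : Matrix (Fin d) (Fin d) ℝ) : qf M 0 = 0 := by
  unfold qf
  have : (fun i => (0 : EuclideanSpace ℝ (Fin d)) i) = (0 : Fin d → ℝ) := rfl
  rw [this]
  simp

lemma qf_smul (M : Matrix (Fin d) (Fin d) ℝ) (t : ℝ) (ξ : EuclideanSpace ℝ (Fin d)) :
    qf M (t • ξ) = t ^ 2 * qf M ξ := by
  unfold qf
  have : (fun i => (t • ξ) i) = t • (fun i => ξ i) := rfl
  rw [this, Matrix.mulVec_smul, dotProduct_smul, smul_dotProduct]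
  simp [smul_eq_mul]
  ring

lemma qf_add_smul (Sg S : Matrix (Fin d) (Fin d) ℝ) (ε : ℝ) (ξ : EuclideanSpace ℝ (Fin d)) :
    qf (Sg + ε • S) ξ = qf Sg ξ + ε * qf S ξ := by
  unfold qf
  rw [Matrix.add_mulVec, dotProduct_add, Matrix.smul_mulVec,
    dotProduct_smul]
  simp [smul_eq_mul]

lemma cf_line (P : Measure (EuclideanSpace ℝ (Fin d))) (y : EuclideanSpace ℝ (Fin d)) (t : ℝ) :
    cf P (t • y) = ∫ x, Complex.exp (((t * (inner ℝ y x : ℝ) : ℝ) : ℂ) * Complex.I) ∂P := by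
  unfold cf
  congr 1
  funext x
  rw [real_inner_smul_right, real_inner_comm]

lemma cf_phase_concentrate (P : Measure (EuclideanSpace ℝ (Fin d))) [IsProbabilityMeasure P]
    (y : EuclideanSpace ℝ (Fin d)) (c : ℝ)
    (h : ∀ t : ℝ, cf P (t • y) = Complex.exp (((t * c : ℝ) : ℂ) * Complex.I)) :
    P {z | (inner ℝ y z : ℝ) = c} = 1 := by
  have hginner : Measurable fun z : EuclideanSpace ℝ (Fin d) => (inner ℝ y z : ℝ) :=
    (continuous_const.inner continuous_id).measurable
  have hae := conc_ae P (fun z => (inner ℝ y z : ℝ) - c) (hginner.sub measurable_const) ?_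
  · have hS : MeasurableSet {z : EuclideanSpace ℝ (Fin d) | (inner ℝ y z : ℝ) = c} := by
      have : IsClosed {z : EuclideanSpace ℝ (Fin d) | (inner ℝ y z : ℝ) = c} :=
        isClosed_eq (continuous_const.inner continuous_id) continuous_const
      exact this.measurableSet
    have hae2 : ∀ᵐ z ∂P, z ∈ {z : EuclideanSpace ℝ (Fin d) | (inner ℝ y z : ℝ) = c} := by
      filter_upwards [hae] with z hz
      show (inner ℝ y z : ℝ) = c
      linarith
    have h0 : P {z : EuclideanSpace ℝ (Fin d) | (inner ℝ y z : ℝ) = c}ᶜ = 0 := by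
      have := ae_iff.mp hae2
      rw [← this]
      congr 1
    have h2 : P Set.univ - P {z : EuclideanSpace ℝ (Fin d) | (inner ℝ y z : ℝ) = c} = 0 := by
      rw [← measure_compl hS (measure_ne_top P _), h0]
    rw [measure_univ] at h2
    exact le_antisymm prob_le_one (tsub_eq_zero_iff_le.mp h2)
  · intro t
    have hsplit : ∀ z : EuclideanSpace ℝ (Fin d),
        Complex.exp (((t * ((inner ℝ y z : ℝ) - c) : ℝ) : ℂ) * Complex.I)
          = Complex.exp (((t * (inner ℝ y z : ℝ) : ℝ) : ℂ) * Complex.I)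
            * Complex.exp (((-(t * c) : ℝ) : ℂ) * Complex.I) := by
      intro z
      rw [← Complex.exp_add]
      congr 1
      push_cast
      ring
    simp_rw [hsplit]
    rw [integral_mul_const, ← cf_line, h t, ← Complex.exp_add]
    rw [← Complex.exp_zero]
    congr 1
    push_cast
    ring

lemma inner_eq_dot (x y : EuclideanSpace ℝ (Fin d)) :
    (inner ℝ x y : ℝ) = dotProduct (fun i => x i) (fun i => y i) := by
  simp [PiLp.inner_apply, dotProduct, mul_comm]

lemma inner_mulVec_left (C : Matrix (Fin d) (Fin d) ℝ) (x ξ : EuclideanSpace ℝ (Fin d)) :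
    (inner ℝ (WithLp.toLp 2 <| C.mulVec (fun i => x i)) ξ : ℝ)
      = (inner ℝ x (WithLp.toLp 2 <| Cᵀ.mulVec (fun i => ξ i)) : ℝ) := by
  rw [inner_eq_dot, inner_eq_dot]
  show dotProduct (C.mulVec (fun i => x i)) (fun i => ξ i)
    = dotProduct (fun i => x i) (Cᵀ.mulVec (fun i => ξ i))
  rw [Matrix.mulVec_transpose, dotProduct_comm, Matrix.dotProduct_mulVec,
    dotProduct_comm]

lemma affine_measurable (ν : EuclideanSpace ℝ (Fin d)) (C : Matrix (Fin d) (Fin d) ℝ) :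
    Measurable (fun x : EuclideanSpace ℝ (Fin d) =>
      ν + (WithLp.toLp 2 <| C.mulVec (fun i => x i))) := by
  have hc : Continuous (fun x : EuclideanSpace ℝ (Fin d) =>
      (WithLp.toLp 2 <| C.mulVec (fun i => x i))) := by
    refine (PiLp.continuous_toLp _ _).comp (continuous_pi fun i => ?_)
    unfold Matrix.mulVec dotProduct
    exact continuous_finset_sum _ fun j _ => continuous_const.mul
      ((continuous_apply j).comp (PiLp.continuous_ofLp _ _))
  exact (continuous_const.add hc).measurable

lemma cf_map_affine (P : Measure (EuclideanSpace ℝ (Fin d))) [IsProbabilityMeasure P]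
    (ν : EuclideanSpace ℝ (Fin d)) (C : Matrix (Fin d) (Fin d) ℝ)
    (ξ : EuclideanSpace ℝ (Fin d)) :
    cf (P.map (fun x : EuclideanSpace ℝ (Fin d) =>
        ν + (WithLp.toLp 2 <| C.mulVec (fun i => x i)))) ξ
      = Complex.exp (((inner ℝ ν ξ : ℝ) : ℂ) * Complex.I)
        * cf P (WithLp.toLp 2 <| Cᵀ.mulVec (fun i => ξ i)) := by
  unfold cf
  rw [integral_map (affine_measurable ν C).aemeasurable
    (cf_integrand_cont ξ).aestronglyMeasurable]
  have hpt : ∀ x : EuclideanSpace ℝ (Fin d),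
      Complex.exp (((inner ℝ (ν + (WithLp.toLp 2 <| C.mulVec (fun i => x i))) ξ
          : ℝ) : ℂ) * Complex.I)
        = Complex.exp (((inner ℝ ν ξ : ℝ) : ℂ) * Complex.I)
          * Complex.exp (((inner ℝ x (WithLp.toLp 2 <|
              Cᵀ.mulVec (fun i => ξ i)) : ℝ) : ℂ) * Complex.I) := by
    intro x
    rw [← Complex.exp_add]
    congr 1
    have hadd : (inner ℝ (ν + (WithLp.toLp 2 <| C.mulVec (fun i => x i))) ξ : ℝ)
        = (inner ℝ ν ξ : ℝ) + (inner ℝ x (WithLp.toLp 2 <|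
            Cᵀ.mulVec (fun i => ξ i)) : ℝ) := by
      rw [inner_add_left, inner_mulVec_left]
    rw [hadd]
    push_cast
    ring
  simp_rw [hpt]
  rw [integral_const_mul]

end CF

section Main

open Matrix

/-- If `𝓛` is a set of fewer than `(d² + d)/2` lines, then a non-degenerate
elliptical distribution `P` is not determined by its projections onto the lines
of `𝓛`. -/
theorem sharpness_lines {d : ℕ}
    (P : Measure (EuclideanSpace ℝ (Fin d)))
    (hP : ∃ μ Sig ψ, IsElliptical P μ Sig ψ) (hnd : Nondegenerate P)
    (𝓛 : Finset (Submodule ℝ (EuclideanSpace ℝ (Fin d))))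
    (hdim : ∀ L ∈ 𝓛, Module.finrank ℝ L = 1)
    (hcard : 𝓛.card < (d ^ 2 + d) / 2) :
    ∃ Q : Measure (EuclideanSpace ℝ (Fin d)),
      (∃ μ Sig ψ, IsElliptical Q μ Sig ψ) ∧ Nondegenerate Q ∧ Q ≠ P ∧
      ∀ L ∈ 𝓛, P.map L.orthogonalProjectionOnto = Q.map L.orthogonalProjectionOnto := by
  classical
  obtain ⟨μ, Sg, ψ, hprob, hpsd, hψc, hform⟩ := hP
  haveI := hprob
  rcases Nat.eq_zero_or_pos d with hd0 | hd
  · subst hd0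
    exact absurd hcard (by simp)
  -- ψ 0 = 1
  have hψ0 : ψ 0 = 1 := by
    have h0 := hform 0
    rw [cf_zero, qf_zero] at h0
    rw [inner_zero_right] at h0
    simpa using h0.symm
  -- the scatter matrix is positive definite
  have hPD : Sg.PosDef := by
    by_contra hnpd
    rw [Matrix.posDef_iff_dotProduct_mulVec] at hnpd
    push_neg at hnpd
    obtain ⟨x, hx0, hxle⟩ := hnpd hpsd.1
    have hge := (Matrix.posSemidef_iff_dotProduct_mulVec.mp hpsd).2 x
    have hq0 : dotProduct x (Sg.mulVec x) = 0 := by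
      rw [star_trivial] at hxle hge
      exact le_antisymm hxle hge
    set y : EuclideanSpace ℝ (Fin d) := WithLp.toLp 2 x with hy
    have hyne : y ≠ 0 := by
      intro h
      apply hx0
      ext i
      exact congrFun (congrArg (fun (z : EuclideanSpace ℝ (Fin d)) => (z : Fin d → ℝ)) h) i
    have hqy : qf Sg y = 0 := hq0
    have hcf : ∀ t : ℝ, cf P (t • y)
        = Complex.exp (((t * (inner ℝ y μ : ℝ) : ℝ) : ℂ) * Complex.I) := by
      intro t
      rw [hform (t • y), qf_smul, hqy, mul_zero, hψ0, mul_one]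
      have : (inner ℝ μ (t • y) : ℝ) = t * (inner ℝ y μ : ℝ) := by
        rw [real_inner_smul_right, real_inner_comm]
      rw [this]
    exact hnd y hyne _ (cf_phase_concentrate P y _ hcf)
  -- pick spanning vectors of the lines
  have hvec : ∀ L : {L // L ∈ 𝓛}, ∃ v : EuclideanSpace ℝ (Fin d),
      v ∈ (L : Submodule ℝ (EuclideanSpace ℝ (Fin d))) ∧ v ≠ 0 := by
    rintro ⟨L, hL⟩
    have hne : L ≠ ⊥ := by
      intro h
      have := hdim L hL
      rw [h] at this
      simp [finrank_bot] at this
    obtain ⟨v, hvL, hvne⟩ := Submodule.exists_mem_ne_zero_of_ne_bot hne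
    exact ⟨v, hvL, hvne⟩
  choose v hvL hvne using hvec
  -- find the symmetric perturbation
  obtain ⟨S, hSs, hSne, hSv⟩ := exists_good_sym d
    (fun L : {L // L ∈ 𝓛} => (fun i => v L i))
    (by simpa [Fintype.card_coe] using hcard)
  obtain ⟨ε, hε, hPD'⟩ := posdef_perturb hd hPD hSs
  set Sg' := Sg + ε • S with hSg'
  obtain ⟨C, hCdet, hCconj⟩ := exists_conjugator hPD hPD'
  -- the affine transformation
  set ν : EuclideanSpace ℝ (Fin d) :=
    μ - (WithLp.toLp 2 <| C.mulVec (fun i => μ i)) with hν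
  set T : EuclideanSpace ℝ (Fin d) → EuclideanSpace ℝ (Fin d) :=
    fun x => ν + (WithLp.toLp 2 <| C.mulVec (fun i => x i)) with hTdef
  have hTm : Measurable T := affine_measurable ν C
  set Q := P.map T with hQ
  haveI hQprob : IsProbabilityMeasure Q := Measure.isProbabilityMeasure_map hTm.aemeasurable
  -- the quadratic form transformation
  have hqf_conj : ∀ ξ : EuclideanSpace ℝ (Fin d),
      qf Sg (WithLp.toLp 2 <| Cᵀ.mulVec (fun i => ξ i)) = qf Sg' ξ := by
    intro ξ
    show dotProduct (Cᵀ.mulVec (fun i => ξ i))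
        (Sg.mulVec (Cᵀ.mulVec (fun i => ξ i)))
      = dotProduct (fun i => ξ i) (Sg'.mulVec (fun i => ξ i))
    rw [← hCconj]
    rw [Matrix.mulVec_mulVec]
    rw [Matrix.mulVec_transpose]
    rw [← Matrix.dotProduct_mulVec]
    rw [Matrix.mulVec_mulVec]
    rw [← Matrix.mul_assoc]
  -- characteristic function of Q
  have hcfQ : ∀ ξ, cf Q ξ
      = Complex.exp (((inner ℝ μ ξ : ℝ) : ℂ) * Complex.I) * ψ (qf Sg' ξ) := by
    intro ξ
    rw [hQ, hTdef]
    rw [cf_map_affine P ν C ξ]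
    rw [hform]
    have hph : (inner ℝ ν ξ : ℝ)
        + (inner ℝ μ (WithLp.toLp 2 <| Cᵀ.mulVec (fun i => ξ i)) : ℝ)
        = (inner ℝ μ ξ : ℝ) := by
      rw [← inner_mulVec_left C μ ξ, ← inner_add_left, hν]
      rw [sub_add_cancel]
    rw [hqf_conj ξ, ← mul_assoc, ← Complex.exp_add]
    congr 2
    rw [← hph]
    push_cast
    ring
  have hellQ : IsElliptical Q μ Sg' ψ := ⟨hQprob, hPD'.posSemidef, hψc, hcfQ⟩
  -- the inverse transpose is injective
  haveI hCTinv : Invertible Cᵀ := C.transpose.invertibleOfIsUnitDet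
    (by rwa [Matrix.det_transpose])
  have hCTinj : Function.Injective (Cᵀ.mulVec) := Matrix.mulVec_injective_iff_isUnit.mpr (isUnit_of_invertible Cᵀ)
  -- Q is nondegenerate
  have hndQ : Nondegenerate Q := by
    intro y hy c
    have hSmeas : MeasurableSet {z : EuclideanSpace ℝ (Fin d) | (inner ℝ y z : ℝ) = c} :=
      (isClosed_eq (continuous_const.inner continuous_id) continuous_const).measurableSet
    rw [hQ, Measure.map_apply hTm hSmeas]
    set y' : EuclideanSpace ℝ (Fin d) := WithLp.toLp 2 (Cᵀ.mulVec (fun i => y i)) with hy'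
    have hy'ne : y' ≠ 0 := by
      intro h0
      apply hy
      have h1 : Cᵀ.mulVec (fun i => y i) = Cᵀ.mulVec 0 := by
        rw [Matrix.mulVec_zero]
        exact congrArg (fun (z : EuclideanSpace ℝ (Fin d)) => (z : Fin d → ℝ)) h0
      have h2 : (fun i => y i) = (0 : Fin d → ℝ) := hCTinj h1
      ext i
      exact congrFun h2 i
    have hset : T ⁻¹' {z : EuclideanSpace ℝ (Fin d) | (inner ℝ y z : ℝ) = c}
        = {x : EuclideanSpace ℝ (Fin d) | (inner ℝ y' x : ℝ) = c - (inner ℝ y ν : ℝ)} := by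
      ext x
      simp only [Set.mem_preimage, Set.mem_setOf_eq, hTdef]
      have hexpand : (inner ℝ y (ν + (WithLp.toLp 2 <|
          C.mulVec (fun i => x i))) : ℝ)
          = (inner ℝ y ν : ℝ) + (inner ℝ y' x : ℝ) := by
        rw [inner_add_right]
        congr 1
        rw [real_inner_comm, inner_mulVec_left C x y, real_inner_comm]
      rw [hexpand]
      constructor
      · intro h1; linarith
      · intro h1; linarith
    rw [hset]
    exact hnd y' hy'ne _
  -- Q ≠ P
  have hQneP : Q ≠ P := by
    intro hQP
    obtain ⟨w, hw⟩ : ∃ w : Fin d → ℝ, dotProduct w (S.mulVec w) ≠ 0 := by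
      by_contra hc
      push_neg at hc
      exact hSne (sym_qf_zero_imp hSs hc)
    have hw0 : w ≠ (0 : Fin d → ℝ) := by
      intro h0
      rw [h0] at hw
      simp at hw
    have hapos : 0 < qf Sg (WithLp.toLp 2 <| w) := posDef_pos hPD hw0
    have ha'pos : 0 < qf Sg' (WithLp.toLp 2 <| w) := posDef_pos hPD' hw0
    have hexp : qf Sg' (WithLp.toLp 2 <| w)
        = qf Sg (WithLp.toLp 2 <| w)
          + ε * qf S (WithLp.toLp 2 <| w) := by
      rw [hSg']
      exact qf_add_smul Sg S ε _
    have haa' : qf Sg (WithLp.toLp 2 <| w)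
        ≠ qf Sg' (WithLp.toLp 2 <| w) := by
      intro hco
      rw [hexp] at hco
      have h1 : ε * qf S (WithLp.toLp 2 <| w) = 0 := by linarith
      have h2 : qf S (WithLp.toLp 2 <| w)
          = dotProduct w (S.mulVec w) := rfl
      rcases mul_eq_zero.mp h1 with h3 | h3
      · exact hε.ne' h3
      · rw [h2] at h3; exact hw h3
    have hψs : ∀ s : ℝ, 0 ≤ s → ψ (qf Sg (WithLp.toLp 2 <| w) * s)
        = ψ (qf Sg' (WithLp.toLp 2 <| w) * s) := by
      intro s hs
      have h1 := hform (Real.sqrt s • (WithLp.toLp 2 <| w))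
      have h2 := hcfQ (Real.sqrt s • (WithLp.toLp 2 <| w))
      rw [hQP] at h2
      rw [h1] at h2
      have h3 := mul_left_cancel₀ (Complex.exp_ne_zero _) h2
      rw [qf_smul, qf_smul, Real.sq_sqrt hs] at h3
      rw [mul_comm (qf Sg _) s, mul_comm (qf Sg' _) s]
      exact h3
    have hconst := psi_const hψc hapos ha'pos haa' hψs
    -- now the characteristic function of P is a pure phase
    set y : EuclideanSpace ℝ (Fin d) := EuclideanSpace.single (⟨0, hd⟩ : Fin d) (1:ℝ) with hY
    have hyne : y ≠ 0 := by
      intro h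
      have h1 : ‖y‖ = 1 := by
        rw [hY]
        exact (EuclideanSpace.norm_single _ _).trans norm_one
      rw [h] at h1
      simp at h1
    have hqfnn : ∀ ξ : EuclideanSpace ℝ (Fin d), 0 ≤ qf Sg ξ := by
      intro ξ
      have := (Matrix.posSemidef_iff_dotProduct_mulVec.mp hpsd).2 (fun i => ξ i)
      rw [star_trivial] at this
      exact this
    have hcf : ∀ t : ℝ, cf P (t • y)
        = Complex.exp (((t * (inner ℝ y μ : ℝ) : ℝ) : ℂ) * Complex.I) := by
      intro t
      rw [hform (t • y)]
      rw [hconst _ (hqfnn (t • y)), hψ0, mul_one]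
      have : (inner ℝ μ (t • y) : ℝ) = t * (inner ℝ y μ : ℝ) := by
        rw [real_inner_smul_right, real_inner_comm]
      rw [this]
    exact hnd y hyne _ (cf_phase_concentrate P y _ hcf)
  -- the projections agree
  refine ⟨Q, ⟨μ, Sg', ψ, hellQ⟩, hndQ, hQneP, ?_⟩
  intro L hL
  set vL : EuclideanSpace ℝ (Fin d) := v ⟨L, hL⟩ with hvLdef
  have hvLmem : vL ∈ L := hvL ⟨L, hL⟩
  have hvLne : vL ≠ 0 := hvne ⟨L, hL⟩
  have hrv : 0 < ‖vL‖ := norm_pos_iff.mpr hvLne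
  set u₀ : EuclideanSpace ℝ (Fin d) := ‖vL‖⁻¹ • vL with hu₀def
  have hu₀mem : u₀ ∈ L := L.smul_mem _ hvLmem
  have hu₀norm : ‖u₀‖ = 1 := by
    rw [hu₀def, norm_smul, norm_inv, norm_norm, inv_mul_cancel₀ hrv.ne']
  have hu₀ne : u₀ ≠ 0 := by
    intro h
    rw [h] at hu₀norm
    simp at hu₀norm
  -- L = span {u₀}
  have hLspan : Submodule.span ℝ ({u₀} : Set (EuclideanSpace ℝ (Fin d))) = L := by
    refine Submodule.eq_of_le_of_finrank_le ?_ ?_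
    · rw [Submodule.span_le, Set.singleton_subset_iff]
      exact hu₀mem
    · rw [hdim L hL, finrank_span_singleton hu₀ne]
  -- the coordinate measurable equivalence L ≃ᵐ ℝ
  set m : L → ℝ := fun z => (inner ℝ u₀ (z : EuclideanSpace ℝ (Fin d)) : ℝ) with hmdef
  set minv : ℝ → L := fun t => ⟨t • u₀, L.smul_mem t hu₀mem⟩ with hminvdef
  have hleft : ∀ z : L, minv (m z) = z := by
    intro z
    have hz : (z : EuclideanSpace ℝ (Fin d)) ∈ Submodule.span ℝ
        ({u₀} : Set (EuclideanSpace ℝ (Fin d))) := by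
      rw [hLspan]; exact z.2
    obtain ⟨cz, hcz⟩ := Submodule.mem_span_singleton.mp hz
    have hm : m z = cz := by
      rw [hmdef]
      simp only
      rw [← hcz, real_inner_smul_right, real_inner_self_eq_norm_sq, hu₀norm]
      simp
    rw [hm]
    apply Subtype.ext
    rw [hminvdef]
    exact hcz
  have hright : ∀ t : ℝ, m (minv t) = t := by
    intro t
    rw [hmdef, hminvdef]
    simp only
    rw [real_inner_smul_right, real_inner_self_eq_norm_sq, hu₀norm]
    simp
  have hmm : Measurable m :=
    ((continuous_const.inner continuous_id).measurable).comp measurable_subtype_coe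
  have hmim : Measurable minv := by
    apply Measurable.subtype_mk
    exact (continuous_id.smul continuous_const).measurable
  set me : L ≃ᵐ ℝ :=
    { toFun := m
      invFun := minv
      left_inv := hleft
      right_inv := hright
      measurable_toFun := hmm
      measurable_invFun := hmim } with hmedef
  have hπm : Measurable L.orthogonalProjectionOnto := L.orthogonalProjectionOnto.continuous.measurable
  -- composition is the inner ℝ product with u₀
  have hcomp : (⇑me) ∘ (⇑L.orthogonalProjectionOnto) =
      fun x : EuclideanSpace ℝ (Fin d) => (inner ℝ u₀ x : ℝ) := by
    funext x
    show (inner ℝ u₀ ((L.orthogonalProjectionOnto x : L) : EuclideanSpace ℝ (Fin d)) : ℝ)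
      = (inner ℝ u₀ x : ℝ)
    have hmem := L.sub_starProjection_mem_orthogonal x
    have h0 : (inner ℝ u₀ (x - ((L.orthogonalProjectionOnto x : L) : EuclideanSpace ℝ (Fin d))) : ℝ)
        = 0 := (Submodule.mem_orthogonal L _).mp hmem u₀ hu₀mem
    rw [inner_sub_right] at h0
    linarith
  -- the scalar pushforwards agree
  have hg : Measurable fun x : EuclideanSpace ℝ (Fin d) => (inner ℝ u₀ x : ℝ) :=
    (continuous_const.inner continuous_id).measurable
  haveI : IsProbabilityMeasure (P.map fun x : EuclideanSpace ℝ (Fin d) => (inner ℝ u₀ x : ℝ)) :=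
    Measure.isProbabilityMeasure_map hg.aemeasurable
  haveI : IsProbabilityMeasure (Q.map fun x : EuclideanSpace ℝ (Fin d) => (inner ℝ u₀ x : ℝ)) :=
    Measure.isProbabilityMeasure_map hg.aemeasurable
  have hqfu₀ : qf S u₀ = 0 := by
    rw [hu₀def, qf_smul]
    have : qf S vL = 0 := hSv ⟨L, hL⟩
    rw [this, mul_zero]
  have hqfeq : ∀ t : ℝ, qf Sg' (t • u₀) = qf Sg (t • u₀) := by
    intro t
    have e1 : qf Sg' (t • u₀) = t ^ 2 * qf Sg' u₀ := qf_smul _ _ _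
    have e2 : qf Sg (t • u₀) = t ^ 2 * qf Sg u₀ := qf_smul _ _ _
    have e3 : qf Sg' u₀ = qf Sg u₀ + ε * qf S u₀ := by
      rw [hSg']
      exact qf_add_smul Sg S ε u₀
    rw [e1, e2, e3, hqfu₀, mul_zero, add_zero]
  have hcfline : ∀ t : ℝ, cf P (t • u₀) = cf Q (t • u₀) := by
    intro t
    rw [hform (t • u₀), hcfQ (t • u₀), hqfeq t]
  have hkey : P.map (fun x : EuclideanSpace ℝ (Fin d) => (inner ℝ u₀ x : ℝ))
      = Q.map (fun x : EuclideanSpace ℝ (Fin d) => (inner ℝ u₀ x : ℝ)) := by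
    apply meas_ext_of_cf
    intro t
    have hmint : AEStronglyMeasurable (fun x : ℝ => Complex.exp (t * x * Complex.I))
        (P.map fun x : EuclideanSpace ℝ (Fin d) => (inner ℝ u₀ x : ℝ)) := by
      apply Continuous.aestronglyMeasurable
      exact Complex.continuous_exp.comp
        ((continuous_const.mul (Complex.continuous_ofReal.comp continuous_id)).mul
          continuous_const)
    have hmint' : AEStronglyMeasurable (fun x : ℝ => Complex.exp (t * x * Complex.I))
        (Q.map fun x : EuclideanSpace ℝ (Fin d) => (inner ℝ u₀ x : ℝ)) := by
      apply Continuous.aestronglyMeasurable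
      exact Complex.continuous_exp.comp
        ((continuous_const.mul (Complex.continuous_ofReal.comp continuous_id)).mul
          continuous_const)
    rw [integral_map hg.aemeasurable hmint, integral_map hg.aemeasurable hmint']
    have hP1 : ∫ x, Complex.exp (t * ((inner ℝ u₀ x : ℝ) : ℂ) * Complex.I) ∂P
        = cf P (t • u₀) := by
      rw [cf_line]
      congr 1
      funext x
      congr 1
      push_cast
      ring
    have hQ1 : ∫ x, Complex.exp (t * ((inner ℝ u₀ x : ℝ) : ℂ) * Complex.I) ∂Q
        = cf Q (t • u₀) := by
      rw [cf_line]
      congr 1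
      funext x
      congr 1
      push_cast
      ring
    rw [hP1, hQ1, hcfline t]
  -- transfer back through the measurable equivalence
  have e1 : (P.map L.orthogonalProjectionOnto).map me
      = (Q.map L.orthogonalProjectionOnto).map me := by
    rw [Measure.map_map me.measurable hπm, Measure.map_map me.measurable hπm, hcomp]
    exact hkey
  have e2 := congrArg (Measure.map (⇑me.symm)) e1
  rwa [MeasurableEquiv.map_symm_map, MeasurableEquiv.map_symm_map] at e2


end Main
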